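/- Let n ≥ 1 and let σ : Fin 4 → Matrix (Fin 2) (Fin 2) ℂ be the Pauli matrices σ₀ = !![1,0;0,1], σ₁ = !![0,1;1,0], σ₂ = !![0,-I;I,0], σ₃ = !![1,0;0,-1]. Let r : Fin (n+1) → ℕ with r 0 = r n = 1 and let X k : Fin 2 → Fin 2 → Matrix (Fin (r k)) (Fin (r (k+1))) ℂ be MPO cores. Define the density-matrix entries ρ : Matrix ((k : Fin n) → Fin 2) ((k : Fin n) → Fin 2) ℂ by ρ i j = the unique entry of the chain product X 0 (i 0) (j 0) * X 1 (i 1) (j 1) * ⋯ * X (n-1) (i (n-1)) (j (n-1)), and for a : Fin n → Fin 4 define the Pauli basis matrix W_a i j := ∏ k, σ (a k) (i k) (j k). Then for every a : Fin n → Fin 4, the trace Matrix.trace (ρ * W_a) equals the unique entry of the chain product Y 0 (a 0) * Y 1 (a 1) * ⋯ * Y (n-1) (a (n-1)), where Y k (α) := ∑_{i, j ∈ Fin 2} (σ α j i) • X k i j. -/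

import Mathlib

open Matrix Complex

/-- Heterogeneous chain product of matrices `M 0 * M 1 * ⋯ * M (m-1)`. -/
noncomputable def chainProd {R : Type} [Semiring R] :
    {m : ℕ} → (ι : Fin (m + 1) → Type) → (∀ i, Fintype (ι i)) → (∀ i, DecidableEq (ι i)) →
    ((i : Fin m) → Matrix (ι i.castSucc) (ι i.succ) R) →
    Matrix (ι 0) (ι (Fin.last m)) R
  | 0, ι, _, de, _ => letI := de 0; (1 : Matrix (ι 0) (ι 0) R)
  | _ + 1, ι, ft, de, M =>
      letI := ft (Fin.succ 0)
      M 0 * chainProd (fun i => ι i.succ) (fun i => ft i.succ) (fun i => de i.succ)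
        (fun i => M i.succ)

/-- Chain product of TT cores with rank profile `r`. -/
noncomputable def ttChain {R : Type} [Semiring R] {m : ℕ} (r : Fin (m + 1) → ℕ)
    (M : (i : Fin m) → Matrix (Fin (r i.castSucc)) (Fin (r i.succ)) R) :
    Matrix (Fin (r 0)) (Fin (r (Fin.last m))) R :=
  chainProd (fun i => Fin (r i)) (fun _ => inferInstance) (fun _ => inferInstance) M

lemma chainProd_multilinear {R : Type} [CommSemiring R] {β : Type} [Fintype β] :
    ∀ {m : ℕ} (ι : Fin (m+1) → Type) (ft : ∀ i, Fintype (ι i)) (de : ∀ i, DecidableEq (ι i))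
      (M : (i : Fin m) → β → Matrix (ι i.castSucc) (ι i.succ) R)
      (c : (i : Fin m) → β → R),
    chainProd ι ft de (fun i => ∑ b, c i b • M i b) =
      ∑ f : (i : Fin m) → β, (∏ i, c i (f i)) • chainProd ι ft de (fun i => M i (f i)) := by
  intro m
  induction m with
  | zero =>
    intro ι ft de M c
    simp [chainProd]
  | succ m ih =>
    intro ι ft de M c
    letI := ft (Fin.succ 0)
    show (∑ b, c 0 b • M 0 b) *
        chainProd (fun i => ι i.succ) (fun i => ft i.succ) (fun i => de i.succ)
          (fun i => ∑ b, c i.succ b • M i.succ b) = _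
    rw [ih (fun i => ι i.succ) (fun i => ft i.succ) (fun i => de i.succ)
        (fun i => M i.succ) (fun i => c i.succ)]
    rw [Matrix.sum_mul]
    simp only [Matrix.mul_sum]
    rw [← (Fin.consEquiv (fun _ : Fin (m+1) => β)).sum_comp
        (fun f => (∏ i, c i (f i)) • chainProd ι ft de (fun i => M i (f i)))]
    rw [Fintype.sum_prod_type]
    simp only [Fin.consEquiv_apply]
    refine Finset.sum_congr rfl fun b _ => Finset.sum_congr rfl fun g _ => ?_
    show (c 0 b • M 0 b) * ((∏ i, c i.succ (g i)) •
        chainProd (fun i => ι i.succ) (fun i => ft i.succ) (fun i => de i.succ)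
          (fun i => M i.succ (g i))) = _
    rw [Fin.prod_univ_succ]
    simp only [Fin.cons_zero, Fin.cons_succ]
    rw [Matrix.smul_mul, Matrix.mul_smul, smul_smul]
    rfl

/-- Section 5.3: the tensor of Pauli measurements `𝒯*(𝐚) = Tr(ρ W_𝐚)` of a matrix product
operator `ρ` with cores `X k` is an order-`n` TT-format tensor with cores
`Y k α = ∑ i j, σ_α(j, i) • X k i j`. -/
theorem pauli_measurements_tt_format
    {n : ℕ} (hn : 1 ≤ n)
    (σ : Fin 4 → Matrix (Fin 2) (Fin 2) ℂ)
    (hσ0 : σ 0 = !![1, 0; 0, 1])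
    (hσ1 : σ 1 = !![0, 1; 1, 0])
    (hσ2 : σ 2 = !![0, -Complex.I; Complex.I, 0])
    (hσ3 : σ 3 = !![1, 0; 0, -1])
    (r : Fin (n + 1) → ℕ) (h0 : r 0 = 1) (hlast : r (Fin.last n) = 1)
    (X : (k : Fin n) → Fin 2 → Fin 2 → Matrix (Fin (r k.castSucc)) (Fin (r k.succ)) ℂ)
    (ρ : Matrix ((k : Fin n) → Fin 2) ((k : Fin n) → Fin 2) ℂ)
    (hρ : ∀ (i j : (k : Fin n) → Fin 2) (a : Fin (r 0)) (b : Fin (r (Fin.last n))),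
      ρ i j = ttChain r (fun k => X k (i k) (j k)) a b)
    (W : (Fin n → Fin 4) → Matrix ((k : Fin n) → Fin 2) ((k : Fin n) → Fin 2) ℂ)
    (hW : ∀ (a : Fin n → Fin 4) (i j : (k : Fin n) → Fin 2),
      W a i j = ∏ k, σ (a k) (i k) (j k)) :
    ∀ (a : Fin n → Fin 4) (u : Fin (r 0)) (v : Fin (r (Fin.last n))),
      Matrix.trace (ρ * W a) =
        ttChain r (fun k => ∑ i : Fin 2, ∑ j : Fin 2, σ (a k) j i • X k i j) u v := by
  intro a u v
  have hcore : (fun k : Fin n => ∑ i : Fin 2, ∑ j : Fin 2, σ (a k) j i • X k i j)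
      = fun k => ∑ p : Fin 2 × Fin 2, σ (a k) p.2 p.1 • X k p.1 p.2 := by
    funext k; rw [Fintype.sum_prod_type]
  have key := chainProd_multilinear (R := ℂ) (β := Fin 2 × Fin 2)
    (fun i : Fin (n+1) => Fin (r i)) (fun _ => inferInstance) (fun _ => inferInstance)
    (fun k p => X k p.1 p.2) (fun k p => σ (a k) p.2 p.1)
  have hR : ttChain r (fun k => ∑ i : Fin 2, ∑ j : Fin 2, σ (a k) j i • X k i j) u v
      = ∑ f : Fin n → Fin 2 × Fin 2, (∏ k, σ (a k) (f k).2 (f k).1) *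
          ttChain r (fun k => X k (f k).1 (f k).2) u v := by
    unfold ttChain
    rw [hcore, key, Matrix.sum_apply]
    exact Finset.sum_congr rfl fun f _ => by rw [Matrix.smul_apply, smul_eq_mul]
  rw [hR, ← Equiv.sum_comp (Equiv.arrowProdEquivProdArrow (Fin n) (fun _ => Fin 2) (fun _ => Fin 2)).symm,
    Fintype.sum_prod_type]
  have hL : Matrix.trace (ρ * W a) = ∑ i, ∑ j, ρ i j * W a j i := by
    simp [Matrix.trace, Matrix.mul_apply, Matrix.diag]
  rw [hL]
  refine Finset.sum_congr rfl fun i _ => Finset.sum_congr rfl fun j _ => ?_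
  rw [hρ i j u v, hW a j i, mul_comm]
  rfl
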